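/- Let (a_{j₁},b_{j₁}), …, (a_{j_t},b_{j_t}) be integer pairs, each nonzero, such that the associated linear forms Λ_{j_k} = a_{j_k}α + b_{j_k}β are pairwise inequivalent (a_{j_k}b_{j_ℓ} − a_{j_ℓ}b_{j_k} ≠ 0 for k ≠ ℓ). Set Δ = ∏_{1 ≤ k < ℓ ≤ t} |a_{j_k}b_{j_ℓ} − a_{j_ℓ}b_{j_k}| and Ξ = Δ² ∏_{1 ≤ k ≤ t} gcd(a_{j_k}, b_{j_k}). For q ∈ ℕ and (c,d) ∈ ℤ², write u_{j_k} = gcd(q, c·a_{j_k} + d·b_{j_k}). Then: (i) whenever gcd(q,c,d) = 1, one has u_{j₁}u_{j₂}⋯u_{j_t} | Δq; and (ii) for any integers v₁, …, v_t with v₁v₂⋯v_t | Δq, the number of integral pairs (c,d) with 1 ≤ c,d ≤ q, gcd(c,d,q) = 1 and u_{j_k} = v_k for 1 ≤ k ≤ t is at most Ξ q² (v₁⋯v_t)^{−1}. -/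

import Mathlib

open Finset

lemma gcdA (a b c : ℕ) : Nat.gcd a (Nat.lcm b c) ∣ Nat.gcd a b * Nat.gcd a c := by
  have h1 : Nat.lcm b c ∣ b * c := Nat.lcm_dvd (dvd_mul_right b c) (dvd_mul_left c b)
  exact (Nat.gcd_dvd_gcd_of_dvd_right a h1).trans (gcd_mul_dvd_mul_gcd a b c)

lemma gcdB {ι : Type*} [DecidableEq ι] (s : Finset ι) (u : ι → ℕ) (a : ℕ) :
    Nat.gcd a (s.lcm u) ∣ ∏ k ∈ s, Nat.gcd a (u k) := by
  induction s using Finset.induction_on with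
  | empty => simp
  | insert x s' h ih =>
    rw [Finset.lcm_insert, Finset.prod_insert h]
    calc Nat.gcd a (lcm (u x) (s'.lcm u)) ∣ Nat.gcd a (u x) * Nat.gcd a (s'.lcm u) := gcdA _ _ _
    _ ∣ Nat.gcd a (u x) * ∏ k ∈ s', Nat.gcd a (u k) := mul_dvd_mul_left _ ih

lemma gcdC {ι : Type*} [LinearOrder ι] (u : ι → ℕ) (s : Finset ι) :
    ∏ k ∈ s, u k ∣ s.lcm u * ∏ k ∈ s, ∏ l ∈ s.filter (fun l => k < l), Nat.gcd (u k) (u l) := by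
  classical
  induction s using Finset.induction_on with
  | empty => simp
  | insert x s' h ih =>
    have hxfilt : (insert x s').filter (fun l => x < l) = s'.filter (fun l => x < l) := by
      rw [Finset.filter_insert, if_neg (lt_irrefl x)]
    have hprodins : ∏ k ∈ insert x s', ∏ l ∈ (insert x s').filter (fun l => k < l), Nat.gcd (u k) (u l)
        = (∏ l ∈ s'.filter (fun l => x < l), Nat.gcd (u x) (u l)) *
          ((∏ k ∈ s'.filter (fun k => k < x), Nat.gcd (u k) (u x)) *
           ∏ k ∈ s', ∏ l ∈ s'.filter (fun l => k < l), Nat.gcd (u k) (u l)) := by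
      rw [Finset.prod_insert h, hxfilt]
      congr 1
      have step : ∀ k ∈ s', ∏ l ∈ (insert x s').filter (fun l => k < l), Nat.gcd (u k) (u l)
          = (if k < x then Nat.gcd (u k) (u x) else 1) * ∏ l ∈ s'.filter (fun l => k < l), Nat.gcd (u k) (u l) := by
        intro k hk
        rw [Finset.filter_insert]
        by_cases hkx : k < x
        · rw [if_pos hkx, if_pos hkx, Finset.prod_insert (by simp [h])]
        · rw [if_neg hkx, if_neg hkx, one_mul]
      rw [Finset.prod_congr rfl step, Finset.prod_mul_distrib, ← Finset.prod_filter]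
    rw [Finset.prod_insert h, Finset.lcm_insert, hprodins]
    set A := ∏ l ∈ s'.filter (fun l => x < l), Nat.gcd (u x) (u l) with hA
    set B := ∏ k ∈ s'.filter (fun k => k < x), Nat.gcd (u k) (u x) with hB
    set P' := ∏ k ∈ s', ∏ l ∈ s'.filter (fun l => k < l), Nat.gcd (u k) (u l) with hP'
    have h3 : ∏ l ∈ s', Nat.gcd (u x) (u l) = A * B := by
      rw [← Finset.prod_filter_mul_prod_filter_not s' (fun l => x < l)]
      congr 1
      rw [hB]
      rw [show s'.filter (fun l => ¬ x < l) = s'.filter (fun l => l < x) from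
        Finset.filter_congr (fun l hl => by
          have hne : l ≠ x := fun h' => h (h' ▸ hl)
          simp only [not_lt]
          exact ⟨fun h1 => lt_of_le_of_ne h1 hne, le_of_lt⟩)]
      exact Finset.prod_congr rfl (fun l _ => Nat.gcd_comm _ _)
    have h2 : Nat.gcd (u x) (s'.lcm u) ∣ A * B := (gcdB s' u (u x)).trans (dvd_of_eq h3)
    calc u x * ∏ k ∈ s', u k
        ∣ u x * (s'.lcm u * P') := mul_dvd_mul_left _ ih
      _ = lcm (u x) (s'.lcm u) * (Nat.gcd (u x) (s'.lcm u) * P') := by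
          rw [← mul_assoc, ← mul_assoc, mul_comm (GCDMonoid.lcm _ _), show GCDMonoid.lcm (u x) (s'.lcm u) = Nat.lcm (u x) (s'.lcm u) from rfl, Nat.gcd_mul_lcm]
      _ ∣ lcm (u x) (s'.lcm u) * ((A * B) * P') :=
          mul_dvd_mul_left _ (mul_dvd_mul_right h2 P')
      _ = lcm (u x) (s'.lcm u) * (A * (B * P')) := by ring

lemma gcdD (c d q' : ℤ) (ak bk al bl : ℤ) (hcd : Nat.gcd (Int.gcd c d) q'.natAbs = 1) :
    Nat.gcd (Int.gcd q' (c * ak + d * bk)) (Int.gcd q' (c * al + d * bl)) ∣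
      (ak * bl - al * bk).natAbs := by
  set g := Nat.gcd (Int.gcd q' (c * ak + d * bk)) (Int.gcd q' (c * al + d * bl)) with hg
  have hgq : (g : ℤ) ∣ q' :=
    (Int.natCast_dvd_natCast.mpr (Nat.gcd_dvd_left _ _)).trans (Int.gcd_dvd_left _ _)
  have hgk : (g : ℤ) ∣ c * ak + d * bk :=
    (Int.natCast_dvd_natCast.mpr (Nat.gcd_dvd_left _ _)).trans (Int.gcd_dvd_right _ _)
  have hgl : (g : ℤ) ∣ c * al + d * bl :=
    (Int.natCast_dvd_natCast.mpr (Nat.gcd_dvd_right _ _)).trans (Int.gcd_dvd_right _ _)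
  set D := ak * bl - al * bk with hD
  have h1 : (g : ℤ) ∣ c * D := by
    have e : c * D = bl * (c * ak + d * bk) - bk * (c * al + d * bl) := by ring
    rw [e]; exact dvd_sub (hgk.mul_left _) (hgl.mul_left _)
  have h2 : (g : ℤ) ∣ d * D := by
    have e : d * D = ak * (c * al + d * bl) - al * (c * ak + d * bk) := by ring
    rw [e]; exact dvd_sub (hgl.mul_left _) (hgk.mul_left _)
  have h3 : g ∣ Int.gcd c d * D.natAbs := by
    have hgcd : g ∣ Int.gcd (c * D) (d * D) := Nat.dvd_gcd
      (by simpa using Int.natAbs_dvd_natAbs.mpr h1)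
      (by simpa using Int.natAbs_dvd_natAbs.mpr h2)
    rwa [Int.gcd_mul_right] at hgcd
  have h4 : g ∣ q'.natAbs * D.natAbs :=
    Dvd.dvd.mul_right (by simpa using Int.natAbs_dvd_natAbs.mpr hgq) _
  have h5 : g ∣ Nat.gcd (Int.gcd c d * D.natAbs) (q'.natAbs * D.natAbs) := Nat.dvd_gcd h3 h4
  rwa [Nat.gcd_mul_right, hcd, one_mul] at h5
open Finset

lemma countH (J : ℕ) [NeZero J] (t : ℕ) (m : Fin t → ℕ) (hm0 : ∀ k, m k ≠ 0)
    (hJl : Finset.univ.lcm m = J)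
    (A B : Fin t → ℤ) (hAB : ∀ k, IsCoprime (A k) (B k)) :
    ∃ H : AddSubgroup (ZMod J × ZMod J), Nat.card H ≤ J ∧
      ∀ c d : ℤ, ((c : ZMod J), (d : ZMod J)) ∈ H ↔ ∀ k, (m k : ℤ) ∣ c * A k + d * B k := by
  have hJ0 : J ≠ 0 := NeZero.ne J
  have hm : ∀ k, m k ∣ J := fun k => hJl ▸ Finset.dvd_lcm (Finset.mem_univ k)
  haveI : ∀ k, NeZero (m k) := fun k => ⟨hm0 k⟩
  set φ : ∀ k : Fin t, ZMod J × ZMod J →+ ZMod (m k) := fun k =>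
    AddMonoidHom.mk' (fun p => ZMod.castHom (hm k) (ZMod (m k)) (p.1 * (A k : ZMod J) + p.2 * (B k : ZMod J)))
      (by intro p r; simp only [Prod.fst_add, Prod.snd_add, add_mul, map_add]; ring) with hφ
  set H : AddSubgroup (ZMod J × ZMod J) := ⨅ k, (φ k).ker with hH
  have hsurj : ∀ k, Function.Surjective (φ k) := by
    intro k z
    obtain ⟨x, y, hxy⟩ := hAB k
    obtain ⟨n, rfl⟩ := ZMod.intCast_surjective z
    refine ⟨((n * x : ℤ), (n * y : ℤ)), ?_⟩
    show ZMod.castHom (hm k) (ZMod (m k)) (((n * x : ℤ) : ZMod J) * (A k : ZMod J) + ((n * y : ℤ) : ZMod J) * (B k : ZMod J)) = (n : ZMod (m k))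
    have : (((n * x : ℤ) : ZMod J) * (A k : ZMod J) + ((n * y : ℤ) : ZMod J) * (B k : ZMod J))
        = ((n * x * A k + n * y * B k : ℤ) : ZMod J) := by push_cast; ring
    rw [this, map_intCast]
    have : n * x * A k + n * y * B k = n := by linear_combination n * hxy
    rw [this]
  have hcard : ∀ k, Nat.card (φ k).ker * m k = J * J := by
    intro k
    have h1 : Nat.card (ZMod J × ZMod J) = J * J := by
      rw [Nat.card_prod, Nat.card_zmod]
    have h2 : Nat.card ((ZMod J × ZMod J) ⧸ (φ k).ker) = m k := by
      rw [Nat.card_congr (QuotientAddGroup.quotientKerEquivOfSurjective (φ k) (hsurj k)).toEquiv,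
        Nat.card_zmod]
    have h3 := AddSubgroup.card_eq_card_quotient_mul_card_addSubgroup (φ k).ker
    rw [h1, h2] at h3
    rw [mul_comm]
    exact h3.symm
  set c := Nat.card H with hc
  have hc0 : c ≠ 0 := Nat.card_pos.ne'
  have hdvd : ∀ k, c ∣ Nat.card (φ k).ker := fun k =>
    AddSubgroup.card_dvd_of_le (iInf_le _ k)
  have hcJJ : c ∣ J * J := by
    have := AddSubgroup.card_addSubgroup_dvd_card H
    rwa [Nat.card_prod, Nat.card_zmod] at this
  have hmk : ∀ k, m k ∣ (J * J) / c := by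
    intro k
    obtain ⟨w, hw⟩ := hdvd k
    have : (J * J) / c = w * m k := by
      rw [← hcard k, hw]
      rw [mul_assoc, Nat.mul_div_cancel_left _ (Nat.pos_of_ne_zero hc0)]
    rw [this]
    exact dvd_mul_left _ _
  have hJdvd : J ∣ (J * J) / c := by
    have h := Finset.lcm_dvd (s := Finset.univ) (fun k (_ : k ∈ Finset.univ) => hmk k)
    rwa [hJl] at h
  obtain ⟨y, hy⟩ := hJdvd
  have hJJ : J * J = J * y * c := by
    rw [← hy, Nat.div_mul_cancel hcJJ]
  have hcJ : c ≤ J := by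
    have : J = y * c := by
      have := hJJ
      rw [mul_assoc] at this
      exact Nat.eq_of_mul_eq_mul_left (Nat.pos_of_ne_zero hJ0) this
    rw [this]
    rcases Nat.eq_zero_or_pos y with h0 | hpos
    · exfalso; rw [h0, zero_mul] at this; exact hJ0 this
    · exact Nat.le_mul_of_pos_left c hpos
  refine ⟨H, hcJ, ?_⟩
  intro cc dd
  rw [hH, AddSubgroup.mem_iInf]
  have heval : ∀ k, φ k ((cc : ZMod J), (dd : ZMod J)) = ((cc * A k + dd * B k : ℤ) : ZMod (m k)) := by
    intro k
    show ZMod.castHom (hm k) (ZMod (m k)) (((cc : ℤ) : ZMod J) * (A k : ZMod J) + ((dd : ℤ) : ZMod J) * (B k : ZMod J)) = _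
    have : (((cc : ℤ) : ZMod J) * (A k : ZMod J) + ((dd : ℤ) : ZMod J) * (B k : ZMod J))
        = ((cc * A k + dd * B k : ℤ) : ZMod J) := by push_cast; ring
    rw [this, map_intCast]
  constructor
  · intro hmem k
    have := hmem k
    rw [AddMonoidHom.mem_ker, heval k, ZMod.intCast_zmod_eq_zero_iff_dvd] at this
    exact this
  · intro hdv k
    rw [AddMonoidHom.mem_ker, heval k, ZMod.intCast_zmod_eq_zero_iff_dvd]
    exact hdv k
open Finset

lemma ncard_prod' {α β : Type*} (s : Set α) (r : Set β) : (s ×ˢ r).ncard = s.ncard * r.ncard := by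
  rw [← Nat.card_coe_set_eq, ← Nat.card_coe_set_eq, ← Nat.card_coe_set_eq,
    ← Nat.card_prod]
  exact Nat.card_congr (Equiv.Set.prod s r)

lemma count_box (q J : ℕ) (hJ0 : J ≠ 0) (hJq : J ∣ q) (T : Set (ℤ × ℤ))
    (H : AddSubgroup (ZMod J × ZMod J))
    (hT : ∀ p ∈ T, 1 ≤ p.1 ∧ p.1 ≤ (q:ℤ) ∧ 1 ≤ p.2 ∧ p.2 ≤ (q:ℤ) ∧
      ((p.1 : ZMod J), (p.2 : ZMod J)) ∈ H) :
    T.ncard ≤ Nat.card H * ((q / J) * (q / J)) := by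
  have hJpos : (0:ℤ) < (J:ℤ) := by exact_mod_cast Nat.pos_of_ne_zero hJ0
  set F : ℤ × ℤ → (ZMod J × ZMod J) × (ℤ × ℤ) := fun p =>
    (((p.1 : ZMod J), (p.2 : ZMod J)), ((p.1 - 1) / J, (p.2 - 1) / J)) with hF
  have hcomp : ∀ c₁ c₂ : ℤ, (c₁ : ZMod J) = (c₂ : ZMod J) → (c₁ - 1) / J = (c₂ - 1) / J → c₁ = c₂ := by
    intro c₁ c₂ h1 h2
    rw [ZMod.intCast_eq_intCast_iff] at h1
    have h3 : (c₁ - 1) % J = (c₂ - 1) % J := Int.ModEq.sub_right 1 h1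
    have e1 := Int.mul_ediv_add_emod (c₁ - 1) J
    have e2 := Int.mul_ediv_add_emod (c₂ - 1) J
    rw [h2, h3] at e1
    omega
  have hFinj : Function.Injective F := by
    intro p r h
    rw [hF, Prod.mk.injEq, Prod.mk.injEq, Prod.mk.injEq] at h
    obtain ⟨⟨h1, h2⟩, h3, h4⟩ := h
    exact Prod.ext (hcomp _ _ h1 h3) (hcomp _ _ h2 h4)
  have hTfin : T.Finite := by
    apply Set.Finite.subset (Set.finite_Icc ((1:ℤ),(1:ℤ)) ((q:ℤ),(q:ℤ)))
    intro p hp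
    obtain ⟨a1, a2, a3, a4, _⟩ := hT p hp
    simp [Prod.le_def, a1, a2, a3, a4]
  have himg : F '' T ⊆ (H : Set (ZMod J × ZMod J)) ×ˢ
      ((Set.Ico (0:ℤ) ((q / J : ℕ) : ℤ)) ×ˢ (Set.Ico (0:ℤ) ((q / J : ℕ) : ℤ))) := by
    rintro _ ⟨p, hp, rfl⟩
    obtain ⟨a1, a2, a3, a4, a5⟩ := hT p hp
    have hdiv : ∀ x : ℤ, 1 ≤ x → x ≤ (q:ℤ) → (x - 1) / J ∈ Set.Ico (0:ℤ) ((q / J : ℕ) : ℤ) := by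
      intro x hx1 hx2
      constructor
      · exact Int.ediv_nonneg (by omega) (le_of_lt hJpos)
      · rw [Int.ediv_lt_iff_lt_mul hJpos]
        have : ((q / J : ℕ) : ℤ) * (J : ℤ) = (q : ℤ) := by
          exact_mod_cast Nat.div_mul_cancel hJq
        omega
    exact ⟨a5, hdiv _ a1 a2, hdiv _ a3 a4⟩
  have hprodfin : ((H : Set (ZMod J × ZMod J)) ×ˢ
      ((Set.Ico (0:ℤ) ((q / J : ℕ) : ℤ)) ×ˢ (Set.Ico (0:ℤ) ((q / J : ℕ) : ℤ)))).Finite := by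
    haveI : NeZero J := ⟨hJ0⟩
    exact Set.Finite.prod (Set.toFinite _) (Set.Finite.prod (Set.finite_Ico _ _) (Set.finite_Ico _ _))
  calc T.ncard = (F '' T).ncard := (Set.ncard_image_of_injective T hFinj).symm
    _ ≤ _ := Set.ncard_le_ncard himg hprodfin
    _ = Nat.card H * ((q / J) * (q / J)) := by
        have hIco : (Set.Ico (0:ℤ) ((q / J : ℕ) : ℤ)).ncard = q / J := by
          rw [show Set.Ico (0:ℤ) ((q / J : ℕ) : ℤ) = ↑(Finset.Ico (0:ℤ) ((q / J : ℕ) : ℤ)) by simp,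
            Set.ncard_coe_finset, Int.card_Ico]
          rw [sub_zero, Int.toNat_natCast]
        have hHc : ((H : Set (ZMod J × ZMod J))).ncard = Nat.card H := by
          rw [← Nat.card_coe_set_eq]
          rfl
        rw [ncard_prod', ncard_prod', hIco, hHc]

/-- **Lemma 11.** Let (a_k, b_k) (1 ≤ k ≤ t) be nonzero integer pairs with pairwise
inequivalent associated linear forms (a_kb_ℓ − a_ℓb_k ≠ 0 for k ≠ ℓ). Put
Δ = ∏_{k<ℓ} |a_kb_ℓ − a_ℓb_k| and Ξ = Δ² ∏_k gcd(a_k, b_k), and for q ∈ ℕ, (c,d) ∈ ℤ²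
write u_k = gcd(q, c·a_k + d·b_k). Then (i) gcd(q,c,d) = 1 implies u₁⋯u_t ∣ Δq, and
(ii) for integers v₁, …, v_t with v₁⋯v_t ∣ Δq, the number of pairs (c,d) with
1 ≤ c,d ≤ q, gcd(c,d,q) = 1 and u_k = v_k (1 ≤ k ≤ t) is at most Ξq²(v₁⋯v_t)⁻¹. -/
theorem lemma11 (t : ℕ) (a b : Fin t → ℤ)
    (hpair : ∀ k, (a k, b k) ≠ (0, 0))
    (hinequiv : ∀ k ℓ : Fin t, k ≠ ℓ → a k * b ℓ - a ℓ * b k ≠ 0)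
    (Δ : ℤ) (hΔ : Δ = ∏ k : Fin t, ∏ ℓ ∈ Finset.univ.filter (fun ℓ : Fin t => k < ℓ),
      |a k * b ℓ - a ℓ * b k|)
    (Ξ : ℤ) (hΞ : Ξ = Δ ^ 2 * ∏ k : Fin t, (Int.gcd (a k) (b k) : ℤ))
    (q : ℕ) (hq : 0 < q) :
    (∀ c d : ℤ, Int.gcd (Int.gcd c d : ℤ) (q : ℤ) = 1 →
      (∏ k : Fin t, (Int.gcd (q : ℤ) (c * a k + d * b k) : ℤ)) ∣ Δ * q) ∧
    (∀ v : Fin t → ℕ, (∏ k : Fin t, (v k : ℤ)) ∣ Δ * q →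
      (({p : ℤ × ℤ | 1 ≤ p.1 ∧ p.1 ≤ q ∧ 1 ≤ p.2 ∧ p.2 ≤ q ∧
          Int.gcd (Int.gcd p.1 p.2 : ℤ) (q : ℤ) = 1 ∧
          ∀ k : Fin t, Int.gcd (q : ℤ) (p.1 * a k + p.2 * b k) = v k}.ncard : ℝ) ≤
        (Ξ : ℝ) * (q : ℝ) ^ 2 / ∏ k : Fin t, (v k : ℝ))) := by
  set Δn : ℕ := ∏ k : Fin t, ∏ l ∈ Finset.univ.filter (fun l : Fin t => k < l),
    (a k * b l - a l * b k).natAbs with hΔn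
  have hΔcast : (Δn : ℤ) = Δ := by
    rw [hΔ, hΔn]; push_cast [Int.natCast_natAbs]; ring
  -- Part (i)
  have part1 : ∀ c d : ℤ, Int.gcd (Int.gcd c d : ℤ) (q : ℤ) = 1 →
      (∏ k : Fin t, (Int.gcd (q : ℤ) (c * a k + d * b k) : ℤ)) ∣ Δ * q := by
    intro c d hcd
    set u : Fin t → ℕ := fun k => Int.gcd (q : ℤ) (c * a k + d * b k) with hu
    have hcd' : Nat.gcd (Int.gcd c d) ((q : ℤ)).natAbs = 1 := by
      rwa [Int.gcd_natCast_natCast] at hcd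
    have huq : ∀ k, u k ∣ q := fun k => by
      have h := Int.gcd_dvd_left (a := (q : ℤ)) (b := c * a k + d * b k)
      exact_mod_cast h
    have hlcm : Finset.univ.lcm u ∣ q := Finset.lcm_dvd (fun k _ => huq k)
    have hG : (∏ k : Fin t, ∏ l ∈ Finset.univ.filter (fun l : Fin t => k < l),
        Nat.gcd (u k) (u l)) ∣ Δn :=
      Finset.prod_dvd_prod_of_dvd _ _ (fun k _ => Finset.prod_dvd_prod_of_dvd _ _
        (fun l _ => gcdD c d q (a k) (b k) (a l) (b l) hcd'))
    have hmain : ∏ k : Fin t, u k ∣ q * Δn :=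
      (gcdC u Finset.univ).trans (mul_dvd_mul hlcm hG)
    calc (∏ k : Fin t, (Int.gcd (q : ℤ) (c * a k + d * b k) : ℤ))
        = ((∏ k : Fin t, u k : ℕ) : ℤ) := by push_cast; rfl
      _ ∣ ((q * Δn : ℕ) : ℤ) := Int.natCast_dvd_natCast.mpr hmain
      _ = Δ * q := by rw [Nat.cast_mul, hΔcast]; ring
  refine ⟨part1, ?_⟩
  -- Part (ii)
  intro v hv
  set S : Set (ℤ × ℤ) := {p : ℤ × ℤ | 1 ≤ p.1 ∧ p.1 ≤ q ∧ 1 ≤ p.2 ∧ p.2 ≤ q ∧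
      Int.gcd (Int.gcd p.1 p.2 : ℤ) (q : ℤ) = 1 ∧
      ∀ k : Fin t, Int.gcd (q : ℤ) (p.1 * a k + p.2 * b k) = v k} with hS
  have hΞ0 : (0:ℝ) ≤ (Ξ : ℝ) := by
    have : (0:ℤ) ≤ Ξ := by
      rw [hΞ]
      exact mul_nonneg (sq_nonneg _) (Finset.prod_nonneg fun k _ => Int.natCast_nonneg _)
    exact_mod_cast this
  rcases S.eq_empty_or_nonempty with hSe | ⟨⟨c₀, d₀⟩, hw⟩
  · rw [hSe, Set.ncard_empty]
    push_cast
    apply div_nonneg (mul_nonneg hΞ0 (by positivity))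
    exact Finset.prod_nonneg fun k _ => by positivity
  -- nonempty case: extract witness data
  obtain ⟨_, _, _, _, hw5, hw6⟩ := hw
  have hcd' : Nat.gcd (Int.gcd c₀ d₀) ((q : ℤ)).natAbs = 1 := by
    rwa [Int.gcd_natCast_natCast] at hw5
  have hvq : ∀ k, v k ∣ q := by
    intro k
    rw [← hw6 k]
    have h := Int.gcd_dvd_left (a := (q : ℤ)) (b := c₀ * a k + d₀ * b k)
    exact_mod_cast h
  have hv0 : ∀ k, v k ≠ 0 := by
    intro k hk
    have h := hw6 k
    rw [hk, Int.gcd_eq_zero_iff] at h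
    have : (q : ℤ) = 0 := h.1
    omega
  set g : Fin t → ℕ := fun k => Int.gcd (a k) (b k) with hgdef
  have hg0 : ∀ k, g k ≠ 0 := by
    intro k hk
    rw [hgdef] at hk
    simp only [Int.gcd_eq_zero_iff] at hk
    exact hpair k (by rw [hk.1, hk.2])
  set a' : Fin t → ℤ := fun k => a k / (g k) with ha'
  set b' : Fin t → ℤ := fun k => b k / (g k) with hb'
  have haa : ∀ k, a k = (g k : ℤ) * a' k := fun k =>
    (Int.mul_ediv_cancel' (Int.gcd_dvd_left _ _)).symm
  have hbb : ∀ k, b k = (g k : ℤ) * b' k := fun k =>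
    (Int.mul_ediv_cancel' (Int.gcd_dvd_right _ _)).symm
  have hcop : ∀ k, IsCoprime (a' k) (b' k) := by
    intro k
    rw [Int.isCoprime_iff_gcd_eq_one]
    exact Int.gcd_div_gcd_div_gcd (Nat.pos_of_ne_zero (hg0 k))
  set e : Fin t → ℕ := fun k => Nat.gcd (v k) (g k) with hedef
  have he0 : ∀ k, e k ≠ 0 := fun k hk => hv0 k (Nat.gcd_eq_zero_iff.mp hk).1
  set m : Fin t → ℕ := fun k => v k / e k with hmdef
  have hme : ∀ k, m k * e k = v k := fun k => Nat.div_mul_cancel (Nat.gcd_dvd_left _ _)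
  have hm0 : ∀ k, m k ≠ 0 := fun k hk => hv0 k (by rw [← hme k, hk, zero_mul])
  have hmv : ∀ k, m k ∣ v k := fun k => ⟨e k, (hme k).symm⟩
  have hmdvd : ∀ (c d : ℤ), (∀ k, (v k : ℤ) ∣ c * a k + d * b k) →
      ∀ k, (m k : ℤ) ∣ c * a' k + d * b' k := by
    intro c d hdvd k
    have hexp : c * a k + d * b k = (g k : ℤ) * (c * a' k + d * b' k) := by
      rw [haa k, hbb k]; ring
    have h1 : (v k : ℤ) ∣ (g k : ℤ) * (c * a' k + d * b' k) := hexp ▸ hdvd k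
    have hge : (e k : ℤ) * ((g k / e k : ℕ) : ℤ) = (g k : ℤ) := by
      exact_mod_cast congrArg (Nat.cast : ℕ → ℤ) (Nat.mul_div_cancel' (Nat.gcd_dvd_right (v k) (g k)))
    have h2 : ((e k : ℤ)) * ((m k : ℤ)) ∣ (e k : ℤ) * (((g k / e k : ℕ) : ℤ) * (c * a' k + d * b' k)) := by
      rw [← mul_assoc, hge]
      rw [mul_comm ((e k : ℤ)) ((m k : ℤ))]
      exact_mod_cast (by rw [hme k]; exact h1 : ((m k * e k : ℕ) : ℤ) ∣ (g k : ℤ) * (c * a' k + d * b' k))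
    have h3 : (m k : ℤ) ∣ ((g k / e k : ℕ) : ℤ) * (c * a' k + d * b' k) :=
      (mul_dvd_mul_iff_left (Int.natCast_ne_zero.mpr (he0 k))).mp h2
    have hcopme : IsCoprime ((m k : ℤ)) (((g k / e k : ℕ)) : ℤ) := by
      rw [Int.isCoprime_iff_gcd_eq_one, Int.gcd_natCast_natCast]
      exact Nat.coprime_div_gcd_div_gcd (Nat.pos_of_ne_zero (he0 k))
    exact hcopme.dvd_of_dvd_mul_left h3
  have hSdvd : ∀ p ∈ S, ∀ k, (v k : ℤ) ∣ p.1 * a k + p.2 * b k := by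
    intro p hp k
    rw [← (hp.2.2.2.2.2 k)]
    exact Int.gcd_dvd_right _ _
  set J : ℕ := Finset.univ.lcm m with hJdef
  have hJq : J ∣ q := Finset.lcm_dvd fun k _ => (hmv k).trans (hvq k)
  have hJ0 : J ≠ 0 := fun h => (by omega : q ≠ 0) (Nat.eq_zero_of_zero_dvd (h ▸ hJq))
  haveI : NeZero J := ⟨hJ0⟩
  obtain ⟨H, hHcard, hHmem⟩ := countH J t m hm0 hJdef.symm a' b' hcop
  have hbox : S.ncard ≤ Nat.card H * ((q / J) * (q / J)) := by
    apply count_box q J hJ0 hJq S H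
    intro p hp
    refine ⟨hp.1, hp.2.1, hp.2.2.1, hp.2.2.2.1, ?_⟩
    rw [hHmem]
    exact hmdvd p.1 p.2 (hSdvd p hp)
  set N : ℕ := S.ncard with hN
  set Γ : ℕ := ∏ k : Fin t, g k with hΓdef
  set Pn : ℕ := ∏ k : Fin t, v k with hPndef
  have hGv : (∏ k : Fin t, ∏ l ∈ Finset.univ.filter (fun l : Fin t => k < l),
      Nat.gcd (v k) (v l)) ∣ Δn :=
    Finset.prod_dvd_prod_of_dvd _ _ (fun k _ => Finset.prod_dvd_prod_of_dvd _ _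
      (fun l _ => by
        rw [← hw6 k, ← hw6 l]
        exact gcdD c₀ d₀ q (a k) (b k) (a l) (b l) hcd'))
  have hlcmv : Finset.univ.lcm v ∣ J * Γ := Finset.lcm_dvd fun k _ => by
    rw [← hme k]
    exact mul_dvd_mul (Finset.dvd_lcm (Finset.mem_univ k))
      ((Nat.gcd_dvd_right _ _).trans (Finset.dvd_prod_of_mem g (Finset.mem_univ k)))
  have hPd : Pn ∣ J * Γ * Δn := (gcdC v Finset.univ).trans (mul_dvd_mul hlcmv hGv)
  have hPn0 : Pn ≠ 0 := Finset.prod_ne_zero_iff.mpr fun k _ => hv0 k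
  have hΔn0 : Δn ≠ 0 := by
    rw [hΔn]
    rw [Finset.prod_ne_zero_iff]
    intro k _
    rw [Finset.prod_ne_zero_iff]
    intro l hl
    simp only [Finset.mem_filter] at hl
    exact Int.natAbs_ne_zero.mpr (hinequiv k l (ne_of_lt hl.2))
  have hΓ0 : Γ ≠ 0 := Finset.prod_ne_zero_iff.mpr fun k _ => hg0 k
  have hJqq : J * (q / J) = q := Nat.mul_div_cancel' hJq
  have hfinalN : N * Pn ≤ (Δn * Δn * Γ) * (q * q) := by
    have h1 : N ≤ J * ((q / J) * (q / J)) := hbox.trans (Nat.mul_le_mul_right _ hHcard)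
    have h2 : Pn ≤ J * Γ * Δn := Nat.le_of_dvd (by positivity) hPd
    have h1Δ : 1 ≤ Δn := Nat.one_le_iff_ne_zero.mpr hΔn0
    calc N * Pn ≤ (J * ((q / J) * (q / J))) * (J * Γ * Δn) := Nat.mul_le_mul h1 h2
      _ = (J * (q / J)) * (J * (q / J)) * (Γ * Δn) := by ring
      _ = (q * q) * (Γ * Δn) := by rw [hJqq]
      _ = q * q * (1 * (Δn * Γ)) := by ring
      _ ≤ q * q * (Δn * (Δn * Γ)) := Nat.mul_le_mul_left _ (Nat.mul_le_mul_right _ h1Δ)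
      _ = (Δn * Δn * Γ) * (q * q) := by ring
  have hΞcast : (Ξ : ℤ) = ((Δn * Δn * Γ : ℕ) : ℤ) := by
    rw [hΞ, ← hΔcast, hΓdef]
    push_cast
    ring
  have hprodv : (∏ k : Fin t, (v k : ℝ)) = (Pn : ℝ) := by
    rw [hPndef]
    push_cast
    rfl
  rw [hprodv, le_div_iff₀ (by exact_mod_cast Nat.pos_of_ne_zero hPn0)]
  have hΞr : (Ξ : ℝ) = ((Δn * Δn * Γ : ℕ) : ℝ) := by exact_mod_cast hΞcast
  rw [hΞr]
  have : N * Pn ≤ (Δn * Δn * Γ) * q ^ 2 := by rw [pow_two]; exact hfinalN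
  exact_mod_cast this
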